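/- Let f : ℝ⁴ → ℝ be continuously differentiable and suppose f(v)·(v⁰)³ → 0 as v⁰ → ∞ uniformly on the hyperboloid H₊ = {v : v² = 1, v⁰ > 0}, with enough decay for all integrals to converge. Then for each pair of indices a, b: ∫_{H₊} (δ_b f − 3 v_b f)(v) dμ(v) = 0, where δ_b = v^a(v_a ∂/∂v^b − v_b ∂/∂v^a) is the intrinsic derivative on H₊ and dμ(v) = 2θ(v⁰)δ(v²−1)d⁴v is the Lorentz-invariant measure. -/

import Mathlib

noncomputable section
open MeasureTheory Real Filter Topology

/-- Minkowski inner product on `ℝ⁴` with signature `(+,-,-,-)`. -/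
def mdot (x y : Fin 4 → ℝ) : ℝ := x 0 * y 0 - x 1 * y 1 - x 2 * y 2 - x 3 * y 3

/-- Minkowski square. -/
def mSq (x : Fin 4 → ℝ) : ℝ := mdot x x

/-- Lowered-index components: `x_0 = x⁰`, `x_i = -xⁱ`. -/
def low (a : Fin 4) (x : Fin 4 → ℝ) : ℝ := if a = 0 then x 0 else -(x a)

/-- Euclidean norm of the spatial part. -/
def spN (x : Fin 4 → ℝ) : ℝ := Real.sqrt ((x 1)^2 + (x 2)^2 + (x 3)^2)

/-- Euclidean norm of the full 4-vector. -/
def eN (x : Fin 4 → ℝ) : ℝ := Real.sqrt ((x 0)^2 + (x 1)^2 + (x 2)^2 + (x 3)^2)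

/-- Standard basis vector of `ℝ⁴`. -/
def e4 (a : Fin 4) : Fin 4 → ℝ := Pi.single a 1

/-- The future null vector `l = (1, l⃗)` associated with a direction `l⃗ ∈ S²`. -/
def ell (n : EuclideanSpace ℝ (Fin 3)) : Fin 4 → ℝ := ![1, n 0, n 1, n 2]

/-- The unit 2-sphere of spatial directions. -/
def S2 : Set (EuclideanSpace ℝ (Fin 3)) := Metric.sphere 0 1

/-- Parametrization of the hyperboloid `H₊ = {v² = 1, v⁰ > 0}` by the spatial momentum. -/
def liftH (p : Fin 3 → ℝ) : Fin 4 → ℝ :=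
  ![Real.sqrt (1 + (p 0)^2 + (p 1)^2 + (p 2)^2), p 0, p 1, p 2]

/-- The intrinsic derivative `δ_b = v^a(v_a ∂/∂v^b − v_b ∂/∂v^a)` on `H₊`,
written via an ambient extension of `f`. -/
def dHp (b : Fin 4) (f : (Fin 4 → ℝ) → ℝ) (v : Fin 4 → ℝ) : ℝ :=
  mSq v * fderiv ℝ f v (e4 b) - low b v * fderiv ℝ f v v

/-! ### Auxiliary material -/

section Aux
open Set

/-- Whole-space divergence theorem in `ℝ³`: a `C¹` vector field with `o(‖p‖⁻²)` decay and
integrable divergence has vanishing total divergence. -/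
lemma divergence_integral_zero
    (F : Fin 3 → (Fin 3 → ℝ) → ℝ)
    (F' : Fin 3 → (Fin 3 → ℝ) → (Fin 3 → ℝ) →L[ℝ] ℝ)
    (hd : ∀ i p, HasFDerivAt (F i) (F' i p) p)
    (hint : Integrable (fun p => ∑ i, F' i p (Pi.single i 1)))
    (hdec : ∀ ε > (0:ℝ), ∃ M : ℝ, 0 < M ∧ ∀ p : Fin 3 → ℝ, M ≤ ‖p‖ → ∀ i, ‖p‖^2 * |F i p| ≤ ε) :
    ∫ p : Fin 3 → ℝ, ∑ i, F' i p (Pi.single i 1) = 0 := by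
  set s : ℕ → Set (Fin 3 → ℝ) := fun k => Icc (fun _ => -(k:ℝ)) (fun _ => (k:ℝ)) with hs
  have hsm : ∀ k, MeasurableSet (s k) := fun k => measurableSet_Icc
  have hmono : Monotone s := by
    intro k l hkl
    apply Icc_subset_Icc <;> intro j <;> simp <;> exact_mod_cast hkl
  have hunion : (⋃ k, s k) = univ := by
    ext p
    simp only [mem_iUnion, mem_univ, iff_true]
    obtain ⟨k, hk⟩ := exists_nat_ge ‖p‖
    have h : ∀ j, |p j| ≤ (k:ℝ) := fun j => (Real.norm_eq_abs (p j) ▸ norm_le_pi_norm p j).trans hk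
    exact ⟨k, fun j => neg_le_of_abs_le (h j), fun j => le_of_abs_le (h j)⟩
  have hfi : IntegrableOn (fun p => ∑ i, F' i p (Pi.single i 1)) (⋃ k, s k) :=
    hint.integrableOn
  have hlim : Tendsto (fun k => ∫ p in s k, ∑ i, F' i p (Pi.single i 1)) atTop
      (𝓝 (∫ p : Fin 3 → ℝ, ∑ i, F' i p (Pi.single i 1))) := by
    have := tendsto_setIntegral_of_monotone hsm hmono hfi
    rwa [hunion, setIntegral_univ] at this
  suffices hto : Tendsto (fun k => ∫ p in s k, ∑ i, F' i p (Pi.single i 1)) atTop (𝓝 0) by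
    exact tendsto_nhds_unique hlim hto
  rw [Metric.tendsto_atTop]
  intro ε hε
  obtain ⟨M, hM0, hM⟩ := hdec (ε/25) (by linarith)
  obtain ⟨N, hN⟩ := exists_nat_ge (max M 1)
  refine ⟨N, fun k hk => ?_⟩
  have hkM : M ≤ (k:ℝ) := le_trans (le_trans (le_max_left _ _) hN) (Nat.cast_le.mpr hk)
  have hk1 : (1:ℝ) ≤ (k:ℝ) := le_trans (le_trans (le_max_right _ _) hN) (Nat.cast_le.mpr hk)
  have hkpos : (0:ℝ) < k := lt_of_lt_of_le one_pos hk1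
  rw [dist_zero_right]
  have hle : (fun _ : Fin 3 => -(k:ℝ)) ≤ fun _ => (k:ℝ) := fun j => by
    simp only; linarith
  have hdiv := MeasureTheory.integral_divergence_of_hasFDerivAt_off_countable'
    (n := 2) (fun _ => -(k:ℝ)) (fun _ => (k:ℝ)) hle F (fun i p => F' i p) ∅ countable_empty
    (fun i => (Differentiable.continuous fun x => (hd i x).differentiableAt).continuousOn)
    (fun x _ i => hd i x) (hint.integrableOn)
  rw [hdiv]
  have face_bound : ∀ (i : Fin 3) (c : ℝ), |c| = (k:ℝ) →
      ‖∫ x in Icc ((fun _ : Fin 3 => -(k:ℝ)) ∘ i.succAbove) ((fun _ : Fin 3 => (k:ℝ)) ∘ i.succAbove),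
        F i (i.insertNth c x : Fin 3 → ℝ)‖ ≤ ε/25 * 4 := by
    intro i c hc
    have hvol : volume (Icc ((fun _ : Fin 3 => -(k:ℝ)) ∘ i.succAbove)
        ((fun _ : Fin 3 => (k:ℝ)) ∘ i.succAbove)) < ⊤ := (isCompact_Icc).measure_lt_top
    have hb : ∀ x ∈ Icc ((fun _ : Fin 3 => -(k:ℝ)) ∘ i.succAbove)
        ((fun _ : Fin 3 => (k:ℝ)) ∘ i.succAbove),
        ‖F i (i.insertNth c x : Fin 3 → ℝ)‖ ≤ ε/25 / (k:ℝ)^2 := by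
      intro x _
      have hnorm : (k:ℝ) ≤ ‖(i.insertNth c x : Fin 3 → ℝ)‖ := by
        have h1 : ‖(i.insertNth c x : Fin 3 → ℝ) i‖ ≤ ‖(i.insertNth c x : Fin 3 → ℝ)‖ :=
          norm_le_pi_norm _ i
        have h2 : (i.insertNth c x : Fin 3 → ℝ) i = c :=
          Fin.insertNth_apply_same (α := fun _ => ℝ) i c x
        rw [h2, Real.norm_eq_abs, hc] at h1
        exact h1
      have hMle : M ≤ ‖(i.insertNth c x : Fin 3 → ℝ)‖ := le_trans hkM hnorm
      have hbound := hM _ hMle i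
      rw [Real.norm_eq_abs, le_div_iff₀ (by positivity)]
      have hk2 : (k:ℝ)^2 ≤ ‖(i.insertNth c x : Fin 3 → ℝ)‖^2 :=
        pow_le_pow_left₀ (by positivity) hnorm 2
      nlinarith [abs_nonneg (F i (i.insertNth c x : Fin 3 → ℝ)),
        norm_nonneg (i.insertNth c x : Fin 3 → ℝ)]
    have hbnd := MeasureTheory.norm_setIntegral_le_of_norm_le_const hvol hb
    refine hbnd.trans ?_
    have hvol' : (volume (Icc ((fun _ : Fin 3 => -(k:ℝ)) ∘ i.succAbove)
        ((fun _ : Fin 3 => (k:ℝ)) ∘ i.succAbove))).toReal = (2*k)^2 := by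
      rw [Real.volume_Icc_pi_toReal (fun j => by simp only [Function.comp]; linarith)]
      simp [Function.comp]
      ring
    rw [measureReal_def, hvol']
    have heq : ε/25/(k:ℝ)^2 * (2*k)^2 = ε/25 * 4 := by field_simp; ring
    rw [heq]
  calc ‖∑ i : Fin 3, ((∫ x in Icc ((fun _ : Fin 3 => -(k:ℝ)) ∘ i.succAbove) ((fun _ : Fin 3 => (k:ℝ)) ∘ i.succAbove),
          F i (i.insertNth ((fun _ : Fin 3 => (k:ℝ)) i) x)) -
        ∫ x in Icc ((fun _ : Fin 3 => -(k:ℝ)) ∘ i.succAbove) ((fun _ : Fin 3 => (k:ℝ)) ∘ i.succAbove),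
          F i (i.insertNth ((fun _ : Fin 3 => -(k:ℝ)) i) x))‖
      ≤ ∑ i : Fin 3, (ε/25*4 + ε/25*4) := by
        refine (norm_sum_le _ _).trans (Finset.sum_le_sum fun i _ => ?_)
        refine (norm_sub_le _ _).trans ?_
        exact add_le_add (face_bound i ((k:ℝ)) (abs_of_pos hkpos))
          (face_bound i (-(k:ℝ)) (by rw [abs_neg, abs_of_pos hkpos]))
    _ < ε := by
        simp only [Finset.sum_const, Finset.card_univ, Fintype.card_fin, nsmul_eq_mul]
        linarith

def v0' (p : Fin 3 → ℝ) : ℝ := Real.sqrt (1 + (p 0)^2 + (p 1)^2 + (p 2)^2)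

lemma v0'_pos (p : Fin 3 → ℝ) : 0 < v0' p := Real.sqrt_pos.2 (by positivity)

lemma v0'_sq (p : Fin 3 → ℝ) : (v0' p)^2 = 1 + (p 0)^2 + (p 1)^2 + (p 2)^2 :=
  Real.sq_sqrt (by positivity)

lemma liftH_zero (p : Fin 3 → ℝ) : liftH p 0 = v0' p := rfl
lemma liftH_one (p : Fin 3 → ℝ) : liftH p 1 = p 0 := rfl
lemma liftH_two (p : Fin 3 → ℝ) : liftH p 2 = p 1 := rfl
lemma liftH_three (p : Fin 3 → ℝ) : liftH p 3 = p 2 := rfl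

def proj3 (i : Fin 3) : (Fin 3 → ℝ) →L[ℝ] ℝ := ContinuousLinearMap.proj i

@[simp] lemma proj3_apply (i : Fin 3) (x : Fin 3 → ℝ) : proj3 i x = x i := rfl

lemma proj3_hasFDerivAt (i : Fin 3) (p : Fin 3 → ℝ) :
    HasFDerivAt (fun q : Fin 3 → ℝ => q i) (proj3 i) p :=
  (proj3 i).hasFDerivAt

def dv0 (p : Fin 3 → ℝ) : (Fin 3 → ℝ) →L[ℝ] ℝ :=
  (v0' p)⁻¹ • (p 0 • proj3 0 + p 1 • proj3 1 + p 2 • proj3 2)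

lemma dv0_apply (p x : Fin 3 → ℝ) :
    dv0 p x = (v0' p)⁻¹ * (p 0 * x 0 + p 1 * x 1 + p 2 * x 2) := by
  simp [dv0, ContinuousLinearMap.smul_apply, ContinuousLinearMap.add_apply, smul_eq_mul]
  ring

lemma hasFDerivAt_v0 (p : Fin 3 → ℝ) : HasFDerivAt v0' (dv0 p) p := by
  have h0 := proj3_hasFDerivAt 0 p
  have h1 := proj3_hasFDerivAt 1 p
  have h2 := proj3_hasFDerivAt 2 p
  have hu : HasFDerivAt (fun q : Fin 3 → ℝ => 1 + (q 0)^2 + (q 1)^2 + (q 2)^2)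
      ((p 0 • proj3 0 + p 0 • proj3 0) +
        (p 1 • proj3 1 + p 1 • proj3 1) +
        (p 2 • proj3 2 + p 2 • proj3 2)) p := by
    have : (fun q : Fin 3 → ℝ => 1 + (q 0)^2 + (q 1)^2 + (q 2)^2)
        = fun q : Fin 3 → ℝ => 1 + q 0 * q 0 + q 1 * q 1 + q 2 * q 2 := by
      funext q; ring
    rw [this]
    have := (((h0.mul h0).const_add (1:ℝ)).add (h1.mul h1)).add (h2.mul h2)
    convert this using 1 <;> rfl
  have hne : (1 + (p 0)^2 + (p 1)^2 + (p 2)^2) ≠ 0 := by positivity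
  have h := (Real.hasDerivAt_sqrt hne).comp_hasFDerivAt p hu
  refine h.congr_fderiv ?_
  ext x
  have hsq : Real.sqrt (1 + (p 0)^2 + (p 1)^2 + (p 2)^2) = v0' p := rfl
  simp only [dv0, hsq, ContinuousLinearMap.smul_apply, ContinuousLinearMap.add_apply,
    proj3_apply, smul_eq_mul]
  have : v0' p ≠ 0 := (v0'_pos p).ne'
  ring

def dLift (p : Fin 3 → ℝ) : (Fin 3 → ℝ) →L[ℝ] (Fin 4 → ℝ) :=
  ContinuousLinearMap.pi (Fin.cases (dv0 p) (fun i => proj3 i))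

lemma dLift_apply_zero (p x : Fin 3 → ℝ) : dLift p x 0 = dv0 p x := by
  simp [dLift]

lemma dLift_apply_succ (p x : Fin 3 → ℝ) (i : Fin 3) : dLift p x i.succ = x i := by
  simp [dLift]

lemma liftH_succ (p : Fin 3 → ℝ) (i : Fin 3) : liftH p i.succ = p i := by
  fin_cases i <;> rfl

lemma hasFDerivAt_liftH (p : Fin 3 → ℝ) : HasFDerivAt liftH (dLift p) p := by
  apply hasFDerivAt_pi.2
  intro a
  induction a using Fin.cases with
  | zero => exact hasFDerivAt_v0 p
  | succ i =>
    have h : (fun q : Fin 3 → ℝ => liftH q i.succ) = fun q => q i :=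
      funext fun q => liftH_succ q i
    simp only [Fin.cases_succ]
    exact h ▸ proj3_hasFDerivAt i p

lemma clm_expand (L : (Fin 4 → ℝ) →L[ℝ] ℝ) (x : Fin 4 → ℝ) :
    L x = x 0 * L (e4 0) + x 1 * L (e4 1) + x 2 * L (e4 2) + x 3 * L (e4 3) := by
  have hx : x = x 0 • e4 0 + (x 1 • e4 1 + (x 2 • e4 2 + x 3 • e4 3)) := by
    funext a
    fin_cases a <;> simp [e4, Pi.single_apply]
  calc L x = L (x 0 • e4 0 + (x 1 • e4 1 + (x 2 • e4 2 + x 3 • e4 3))) := by rw [← hx]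
    _ = x 0 * L (e4 0) + x 1 * L (e4 1) + x 2 * L (e4 2) + x 3 * L (e4 3) := by
        simp only [map_add, ContinuousLinearMap.map_smul, smul_eq_mul]; ring

lemma clm_dLift (L : (Fin 4 → ℝ) →L[ℝ] ℝ) (p x : Fin 3 → ℝ) :
    L (dLift p x) = (v0' p)⁻¹ * (p 0 * x 0 + p 1 * x 1 + p 2 * x 2) * L (e4 0)
      + x 0 * L (e4 1) + x 1 * L (e4 2) + x 2 * L (e4 3) := by
  rw [clm_expand]
  rw [show (1 : Fin 4) = (0 : Fin 3).succ from rfl, show (2 : Fin 4) = (1 : Fin 3).succ from rfl,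
    show (3 : Fin 4) = (2 : Fin 3).succ from rfl]
  rw [dLift_apply_zero, dLift_apply_succ, dLift_apply_succ, dLift_apply_succ, dv0_apply]

lemma clm_liftH (L : (Fin 4 → ℝ) →L[ℝ] ℝ) (p : Fin 3 → ℝ) :
    L (liftH p) = v0' p * L (e4 0) + p 0 * L (e4 1) + p 1 * L (e4 2) + p 2 * L (e4 3) := by
  rw [clm_expand, liftH_zero, liftH_one, liftH_two, liftH_three]

lemma mSq_liftH (p : Fin 3 → ℝ) : mSq (liftH p) = 1 := by
  simp only [mSq, mdot, liftH_zero, liftH_one, liftH_two, liftH_three]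
  have := v0'_sq p
  nlinarith [v0'_sq p]

lemma pnormsq_le (p : Fin 3 → ℝ) : ‖p‖^2 ≤ (p 0)^2 + (p 1)^2 + (p 2)^2 := by
  have h : ‖p‖ ≤ Real.sqrt ((p 0)^2 + (p 1)^2 + (p 2)^2) := by
    rw [pi_norm_le_iff_of_nonneg (Real.sqrt_nonneg _)]
    intro i
    rw [Real.norm_eq_abs, ← Real.sqrt_sq_eq_abs]
    apply Real.sqrt_le_sqrt
    fin_cases i <;> simp <;> nlinarith [sq_nonneg (p 0), sq_nonneg (p 1), sq_nonneg (p 2)]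
  calc ‖p‖^2 ≤ (Real.sqrt ((p 0)^2 + (p 1)^2 + (p 2)^2))^2 :=
        pow_le_pow_left₀ (norm_nonneg p) h 2
    _ = (p 0)^2 + (p 1)^2 + (p 2)^2 := Real.sq_sqrt (by positivity)

lemma pnorm_le_v0 (p : Fin 3 → ℝ) : ‖p‖ ≤ v0' p := by
  have h1 : ‖p‖^2 ≤ (v0' p)^2 := by
    rw [v0'_sq]; nlinarith [pnormsq_le p]
  calc ‖p‖ = Real.sqrt (‖p‖^2) := (Real.sqrt_sq (norm_nonneg p)).symm
    _ ≤ Real.sqrt ((v0' p)^2) := Real.sqrt_le_sqrt h1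
    _ = v0' p := Real.sqrt_sq (v0'_pos p).le

end Aux

set_option maxHeartbeats 2000000 in
theorem stmt8 (f : (Fin 4 → ℝ) → ℝ) (hf : ContDiff ℝ 1 f)
    (hdec : ∀ ε > (0:ℝ), ∃ M : ℝ, ∀ p : Fin 3 → ℝ, M ≤ ‖p‖ →
      |f (liftH p)| * (liftH p 0)^3 ≤ ε)
    (b : Fin 4)
    (hi : Integrable (fun p : Fin 3 → ℝ =>
      (dHp b f (liftH p) - 3 * low b (liftH p) * f (liftH p)) / liftH p 0)) :
    ∫ p : Fin 3 → ℝ,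
      (dHp b f (liftH p) - 3 * low b (liftH p) * f (liftH p)) / liftH p 0 = 0 := by
  have hfd : Differentiable ℝ f := hf.differentiable one_ne_zero
  have hgd : ∀ p : Fin 3 → ℝ, HasFDerivAt (fun q => f (liftH q))
      ((fderiv ℝ f (liftH p)).comp (dLift p)) p :=
    fun p => ((hfd (liftH p)).hasFDerivAt.comp p (hasFDerivAt_liftH p))
  -- uniform decay with positive threshold
  have hdec' : ∀ ε > (0:ℝ), ∃ M : ℝ, 0 < M ∧ ∀ p : Fin 3 → ℝ, M ≤ ‖p‖ →
      |f (liftH p)| * (v0' p)^3 ≤ ε := by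
    intro ε hε
    obtain ⟨M, hM⟩ := hdec ε hε
    exact ⟨max M 1, lt_of_lt_of_le one_pos (le_max_right _ _),
      fun p hp => liftH_zero p ▸ hM p (le_trans (le_max_left _ _) hp)⟩
  revert hi
  induction b using Fin.cases with
  | zero =>
    intro hi
    -- F i p = -(p i) * f (liftH p)
    have hd : ∀ (i : Fin 3) (p : Fin 3 → ℝ),
        HasFDerivAt (fun q : Fin 3 → ℝ => -(q i) * f (liftH q))
          ((-(p i)) • ((fderiv ℝ f (liftH p)).comp (dLift p)) +
            f (liftH p) • (-(proj3 i))) p :=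
      fun i p => ((proj3_hasFDerivAt i p).neg).mul (hgd p)
    have key : ∀ p : Fin 3 → ℝ,
        (dHp 0 f (liftH p) - 3 * low 0 (liftH p) * f (liftH p)) / liftH p 0
        = ∑ i, ((-(p i)) • ((fderiv ℝ f (liftH p)).comp (dLift p)) +
            f (liftH p) • (-(proj3 i))) (Pi.single i 1) := by
      intro p
      have hv := (v0'_pos p).ne'
      rw [Fin.sum_univ_three]
      simp only [ContinuousLinearMap.add_apply, ContinuousLinearMap.smul_apply,
        ContinuousLinearMap.neg_apply, proj3_apply, ContinuousLinearMap.comp_apply,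
        smul_eq_mul, Pi.single_eq_same]
      rw [clm_dLift, clm_dLift, clm_dLift]
      simp only [dHp, mSq_liftH, liftH_zero]
      rw [show low 0 (liftH p) = v0' p from by simp [low, liftH_zero]]
      rw [clm_liftH (fderiv ℝ f (liftH p)) p]
      simp only [Pi.single_apply, Fin.reduceEq, reduceIte]
      field_simp
      linear_combination (-(fderiv ℝ f (liftH p) (e4 0))) * v0'_sq p
    have hkey : (fun p : Fin 3 → ℝ =>
        (dHp 0 f (liftH p) - 3 * low 0 (liftH p) * f (liftH p)) / liftH p 0)
        = fun p => ∑ i, ((-(p i)) • ((fderiv ℝ f (liftH p)).comp (dLift p)) +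
            f (liftH p) • (-(proj3 i))) (Pi.single i 1) := funext key
    rw [hkey] at hi ⊢
    apply divergence_integral_zero _ _ hd hi
    intro ε hε
    obtain ⟨M, hM0, hM⟩ := hdec' ε hε
    refine ⟨M, hM0, fun p hp i => ?_⟩
    have hb1 : |(-(p i)) * f (liftH p)| ≤ v0' p * |f (liftH p)| := by
      rw [abs_mul, abs_neg]
      exact mul_le_mul_of_nonneg_right
        ((Real.norm_eq_abs (p i) ▸ norm_le_pi_norm p i).trans (pnorm_le_v0 p)) (abs_nonneg _)
    calc ‖p‖^2 * |(-(p i)) * f (liftH p)|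
        ≤ (v0' p)^2 * (v0' p * |f (liftH p)|) :=
          mul_le_mul (pow_le_pow_left₀ (norm_nonneg p) (pnorm_le_v0 p) 2) hb1 (abs_nonneg _)
            (by positivity)
      _ = |f (liftH p)| * (v0' p)^3 := by ring
      _ ≤ ε := hM p hp
  | succ j =>
    intro hi
    have hd : ∀ (i : Fin 3) (p : Fin 3 → ℝ),
        HasFDerivAt (fun q : Fin 3 → ℝ =>
          (q j * q i + (if i = j then (1:ℝ) else 0)) * f (liftH q) * (v0' q)⁻¹)
          (((p j * p i + (if i = j then (1:ℝ) else 0)) * f (liftH p)) •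
              ((-(v0' p ^ 2)⁻¹) • dv0 p)
            + (v0' p)⁻¹ • ((p j * p i + (if i = j then (1:ℝ) else 0)) •
                ((fderiv ℝ f (liftH p)).comp (dLift p))
              + f (liftH p) • (p j • proj3 i + p i • proj3 j))) p := by
      intro i p
      have hc : HasFDerivAt (fun q : Fin 3 → ℝ => q j * q i + (if i = j then (1:ℝ) else 0))
          (p j • proj3 i + p i • proj3 j) p :=
        ((proj3_hasFDerivAt j p).mul (proj3_hasFDerivAt i p)).add_const _
      have hinv : HasFDerivAt (fun q : Fin 3 → ℝ => (v0' q)⁻¹)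
          ((-(v0' p ^ 2)⁻¹) • dv0 p) p :=
        (hasDerivAt_inv (v0'_pos p).ne').comp_hasFDerivAt p (hasFDerivAt_v0 p)
      exact (hc.mul (hgd p)).mul hinv
    have key : ∀ p : Fin 3 → ℝ,
        (dHp j.succ f (liftH p) - 3 * low j.succ (liftH p) * f (liftH p)) / liftH p 0
        = ∑ i, (((p j * p i + (if i = j then (1:ℝ) else 0)) * f (liftH p)) •
              ((-(v0' p ^ 2)⁻¹) • dv0 p)
            + (v0' p)⁻¹ • ((p j * p i + (if i = j then (1:ℝ) else 0)) •
                ((fderiv ℝ f (liftH p)).comp (dLift p))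
              + f (liftH p) • (p j • proj3 i + p i • proj3 j))) (Pi.single i 1) := by
      intro p
      have hv := (v0'_pos p).ne'
      fin_cases j <;> simp only [Fin.zero_eta, Fin.mk_one, Fin.reduceFinMk, Fin.isValue]
      · rw [show (Fin.succ 0 : Fin 4) = 1 from rfl]
        have hlow : low 1 (liftH p) = -(p 0) := by simp [low, liftH_one]
        rw [Fin.sum_univ_three]
        simp only [ContinuousLinearMap.add_apply, ContinuousLinearMap.smul_apply, smul_eq_mul,
          ContinuousLinearMap.comp_apply, proj3_apply, Pi.single_eq_same]
        rw [clm_dLift, clm_dLift, clm_dLift, dv0_apply, dv0_apply, dv0_apply]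
        simp only [dHp, mSq_liftH, liftH_zero, hlow]
        rw [clm_liftH (fderiv ℝ f (liftH p)) p]
        simp only [Pi.single_apply, Fin.reduceEq, reduceIte]
        field_simp
        linear_combination (p 0 * v0' p * (fderiv ℝ f (liftH p)) (e4 0) - p 0 * f (liftH p)) * v0'_sq p
      · rw [show (Fin.succ 1 : Fin 4) = 2 from rfl]
        have hlow : low 2 (liftH p) = -(p 1) := by simp [low, liftH_two]
        rw [Fin.sum_univ_three]
        simp only [ContinuousLinearMap.add_apply, ContinuousLinearMap.smul_apply, smul_eq_mul,
          ContinuousLinearMap.comp_apply, proj3_apply, Pi.single_eq_same]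
        rw [clm_dLift, clm_dLift, clm_dLift, dv0_apply, dv0_apply, dv0_apply]
        simp only [dHp, mSq_liftH, liftH_zero, hlow]
        rw [clm_liftH (fderiv ℝ f (liftH p)) p]
        simp only [Pi.single_apply, Fin.reduceEq, reduceIte]
        field_simp
        linear_combination (p 1 * v0' p * (fderiv ℝ f (liftH p)) (e4 0) - p 1 * f (liftH p)) * v0'_sq p
      · rw [show (Fin.succ 2 : Fin 4) = 3 from rfl]
        have hlow : low 3 (liftH p) = -(p 2) := by simp [low, liftH_three]
        rw [Fin.sum_univ_three]
        simp only [ContinuousLinearMap.add_apply, ContinuousLinearMap.smul_apply, smul_eq_mul,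
          ContinuousLinearMap.comp_apply, proj3_apply, Pi.single_eq_same]
        rw [clm_dLift, clm_dLift, clm_dLift, dv0_apply, dv0_apply, dv0_apply]
        simp only [dHp, mSq_liftH, liftH_zero, hlow]
        rw [clm_liftH (fderiv ℝ f (liftH p)) p]
        simp only [Pi.single_apply, Fin.reduceEq, reduceIte]
        field_simp
        linear_combination (p 2 * v0' p * (fderiv ℝ f (liftH p)) (e4 0) - p 2 * f (liftH p)) * v0'_sq p
    have hkey : (fun p : Fin 3 → ℝ =>
        (dHp j.succ f (liftH p) - 3 * low j.succ (liftH p) * f (liftH p)) / liftH p 0)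
        = fun p => ∑ i, (((p j * p i + (if i = j then (1:ℝ) else 0)) * f (liftH p)) •
              ((-(v0' p ^ 2)⁻¹) • dv0 p)
            + (v0' p)⁻¹ • ((p j * p i + (if i = j then (1:ℝ) else 0)) •
                ((fderiv ℝ f (liftH p)).comp (dLift p))
              + f (liftH p) • (p j • proj3 i + p i • proj3 j))) (Pi.single i 1) := funext key
    rw [hkey] at hi ⊢
    apply divergence_integral_zero _ _ hd hi
    intro ε hε
    obtain ⟨M, hM0, hM⟩ := hdec' ε hε
    refine ⟨M, hM0, fun p hp i => ?_⟩
    have habs : ∀ l : Fin 3, |p l| ≤ ‖p‖ := fun l => Real.norm_eq_abs (p l) ▸ norm_le_pi_norm p l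
    have hcle : |p j * p i + (if i = j then (1:ℝ) else 0)| ≤ (v0' p)^2 := by
      have h1 : |p j * p i + (if i = j then (1:ℝ) else 0)| ≤ |p j| * |p i| + 1 := by
        refine (abs_add_le _ _).trans (add_le_add (le_of_eq (abs_mul _ _)) ?_)
        split_ifs <;> simp
      have h2 : |p j| * |p i| ≤ ‖p‖^2 := by
        nlinarith [habs i, habs j, abs_nonneg (p i), abs_nonneg (p j), norm_nonneg p]
      rw [v0'_sq]
      nlinarith [pnormsq_le p]
    have hFb : |(p j * p i + (if i = j then (1:ℝ) else 0)) * f (liftH p) * (v0' p)⁻¹|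
        ≤ v0' p * |f (liftH p)| := by
      rw [abs_mul, abs_mul, abs_inv, abs_of_pos (v0'_pos p)]
      have h3 : |p j * p i + (if i = j then (1:ℝ) else 0)| * |f (liftH p)| * (v0' p)⁻¹
          ≤ (v0' p)^2 * |f (liftH p)| * (v0' p)⁻¹ :=
        mul_le_mul_of_nonneg_right (mul_le_mul_of_nonneg_right hcle (abs_nonneg _))
          (inv_nonneg.2 (v0'_pos p).le)
      refine h3.trans (le_of_eq ?_)
      have hv : v0' p ≠ 0 := (v0'_pos p).ne'
      field_simp
    calc ‖p‖^2 * |(p j * p i + (if i = j then (1:ℝ) else 0)) * f (liftH p) * (v0' p)⁻¹|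
        ≤ (v0' p)^2 * (v0' p * |f (liftH p)|) :=
          mul_le_mul (pow_le_pow_left₀ (norm_nonneg p) (pnorm_le_v0 p) 2) hFb (abs_nonneg _)
            (by positivity)
      _ = |f (liftH p)| * (v0' p)^3 := by ring
      _ ≤ ε := hM p hp
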